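/- Let G be an abelian lattice-ordered group with weak order unit, and let M be a convex ℓ-subgroup maximal with respect to not containing any weak order unit. Then M is prime: if a, b ∈ G⁺ and a ∧ b = 0, then a ∈ M or b ∈ M. -/

import Mathlib

variable {G : Type*} [Lattice G] [AddCommGroup G]
  [CovariantClass G G (· + ·) (· ≤ ·)]

/-- The polar of a subset `S` of a lattice-ordered group. -/
def polar (S : Set G) : Set G := {h : G | ∀ g ∈ S, |h| ⊓ |g| = 0}

/-- A convex ℓ-subgroup: a subgroup closed under the lattice operations
which is convex. -/
def IsConvexLSubgroup (H : Set G) : Prop :=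
  (0 : G) ∈ H ∧ (∀ a ∈ H, ∀ b ∈ H, a + b ∈ H) ∧ (∀ a ∈ H, -a ∈ H) ∧
  (∀ a ∈ H, ∀ b ∈ H, a ⊔ b ∈ H) ∧ (∀ a ∈ H, ∀ b ∈ H, a ⊓ b ∈ H) ∧
  (∀ a b : G, 0 ≤ a → a ≤ b → b ∈ H → a ∈ H)

/-- A weak order unit: a positive element with trivial polar. -/
def IsWeakUnit (w : G) : Prop := 0 ≤ w ∧ ∀ x : G, |x| ⊓ w = 0 → x = 0

/-- A d-subgroup: a convex ℓ-subgroup closed under double polars. -/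
def IsDSubgroup (H : Set G) : Prop :=
  IsConvexLSubgroup H ∧ ∀ h ∈ H, polar (polar {h}) ⊆ H

/-- A maximal d-subgroup: a convex ℓ-subgroup maximal with respect to
not containing any weak order unit. -/
def IsMaxD (M : Set G) : Prop :=
  IsConvexLSubgroup M ∧ (∀ w ∈ M, ¬ IsWeakUnit w) ∧
  ∀ H : Set G, IsConvexLSubgroup H → (∀ w ∈ H, ¬ IsWeakUnit w) → M ⊆ H → H = M

/-- A complemented element. -/
def IsComplementedElt (g : G) : Prop :=
  0 ≤ g ∧ ∃ f : G, 0 ≤ f ∧ g ⊓ f = 0 ∧ IsWeakUnit (g ⊔ f)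

/-- A c-subgroup: a convex ℓ-subgroup generated by its complemented elements,
equivalently every element is dominated in absolute value by a complemented
element of the subgroup. -/
def IsCSubgroup (H : Set G) : Prop :=
  IsConvexLSubgroup H ∧ ∀ h ∈ H, ∃ e ∈ H, IsComplementedElt e ∧ |h| ≤ e

/-- A maximal proper c-subgroup: a c-subgroup maximal with respect to
not containing any weak order unit. -/
def IsMaxC (N : Set G) : Prop :=
  IsCSubgroup N ∧ (∀ w ∈ N, ¬ IsWeakUnit w) ∧
  ∀ H : Set G, IsCSubgroup H → (∀ w ∈ H, ¬ IsWeakUnit w) → N ⊆ H → H = N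

/-- `Mc M`: the convex ℓ-subgroup generated by the complemented elements of `M`. -/
def Mc (M : Set G) : Set G :=
  ⋂₀ {H : Set G | IsConvexLSubgroup H ∧ {e ∈ M | IsComplementedElt e} ⊆ H}

/- ### Auxiliary lemmas -/

private lemma aux_inf_add_le (a b c : G) (ha : 0 ≤ a) (hb : 0 ≤ b) (hc : 0 ≤ c) :
    b ⊓ (a + c) ≤ b ⊓ a + b ⊓ c := by
  have h1 : b ⊓ a + b ⊓ c = ((b ⊓ a + b) ⊓ (b ⊓ a + c)) := add_inf _ _ _
  have h2 : b ⊓ a + b = (b + b) ⊓ (a + b) := by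
    rw [add_comm (b ⊓ a) b, add_inf]; rw [add_comm b a]
  have h3 : b ⊓ a + c = (b + c) ⊓ (a + c) := by
    rw [add_comm (b ⊓ a) c, add_inf]; rw [add_comm c b, add_comm c a]
  rw [h1, h2, h3]
  refine le_inf (le_inf ?_ ?_) (le_inf ?_ ?_)
  · exact inf_le_left.trans (le_add_of_nonneg_left hb)
  · exact inf_le_left.trans (le_add_of_nonneg_left ha)
  · exact inf_le_left.trans (le_add_of_nonneg_right hc)
  · exact inf_le_right

private lemma aux_nsmul_inf (a b : G) (ha : 0 ≤ a) (hb : 0 ≤ b) (hab : a ⊓ b = 0) :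
    ∀ n : ℕ, (n • a) ⊓ b = 0 := by
  intro n
  induction n with
  | zero => simpa using inf_eq_left.2 hb
  | succ n ih =>
    have hpos : 0 ≤ (n + 1) • a ⊓ b := le_inf (nsmul_nonneg ha _) hb
    refine le_antisymm ?_ hpos
    have : (n + 1) • a ⊓ b ≤ b ⊓ (n • a) + b ⊓ a := by
      rw [succ_nsmul, inf_comm]
      exact aux_inf_add_le (n • a) b a (nsmul_nonneg ha n) hb ha
    rw [inf_comm b (n • a), inf_comm b a, ih, hab, add_zero] at this
    exact this

private lemma aux_nsmul_inf_nsmul (a b : G) (ha : 0 ≤ a) (hb : 0 ≤ b)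
    (hab : a ⊓ b = 0) (n k : ℕ) : (n • a) ⊓ (k • b) = 0 := by
  have h1 : (n • a) ⊓ b = 0 := aux_nsmul_inf a b ha hb hab n
  rw [inf_comm]
  exact aux_nsmul_inf b (n • a) hb (nsmul_nonneg ha n) (by rw [inf_comm]; exact h1) k

private lemma aux_abs_sup_le (x y : G) : |x ⊔ y| ≤ |x| + |y| := by
  rw [abs_le']
  constructor
  · exact sup_le (le_abs_self x |>.trans (le_add_of_nonneg_right (abs_nonneg y)))
      ((le_abs_self y).trans (le_add_of_nonneg_left (abs_nonneg x)))
  · rw [neg_sup]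
    exact inf_le_left.trans ((neg_le_abs x).trans (le_add_of_nonneg_right (abs_nonneg y)))

private lemma aux_abs_inf_le (x y : G) : |x ⊓ y| ≤ |x| + |y| := by
  rw [abs_le']
  constructor
  · exact inf_le_left.trans ((le_abs_self x).trans (le_add_of_nonneg_right (abs_nonneg y)))
  · rw [neg_inf]
    exact sup_le ((neg_le_abs x).trans (le_add_of_nonneg_right (abs_nonneg y)))
      ((neg_le_abs y).trans (le_add_of_nonneg_left (abs_nonneg x)))

private lemma aux_abs_add_le (x y : G) : |x + y| ≤ |x| + |y| := by
  rw [abs_le']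
  refine ⟨add_le_add (le_abs_self x) (le_abs_self y), ?_⟩
  rw [neg_add]
  exact add_le_add (neg_le_abs x) (neg_le_abs y)

/-- The convex ℓ-subgroup generated by `M ∪ {a}` contains a weak unit when
`a ∉ M`, by maximality. -/
private lemma aux_exists_wu (M : Set G) (hM : IsConvexLSubgroup M)
    (hmax : ∀ H : Set G, IsConvexLSubgroup H → (∀ w ∈ H, ¬ IsWeakUnit w) →
      M ⊆ H → H = M)
    (a : G) (ha : 0 ≤ a) (haM : a ∉ M) :
    ∃ w, IsWeakUnit w ∧ ∃ m ∈ M, 0 ≤ m ∧ ∃ n : ℕ, |w| ≤ m + n • a := by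
  obtain ⟨h0, hadd, hneg, hsup, hinf, hconv⟩ := hM
  set H : Set G := {x | ∃ m ∈ M, 0 ≤ m ∧ ∃ n : ℕ, |x| ≤ m + n • a} with hH
  have hMH : M ⊆ H := by
    intro x hx
    have habs : |x| ∈ M := hsup x hx (-x) (hneg x hx)
    exact ⟨|x|, habs, abs_nonneg x, 0, by simp⟩
  have haH : a ∈ H := ⟨0, h0, le_refl 0, 1, by simp [abs_of_nonneg ha]⟩
  have hHc : IsConvexLSubgroup H := by
    refine ⟨⟨0, h0, le_refl 0, 0, by simp⟩, ?_, ?_, ?_, ?_, ?_⟩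
    · rintro x ⟨m1, hm1, hm1p, n1, hx⟩ y ⟨m2, hm2, hm2p, n2, hy⟩
      refine ⟨m1 + m2, hadd _ hm1 _ hm2, add_nonneg hm1p hm2p, n1 + n2, ?_⟩
      calc |x + y| ≤ |x| + |y| := aux_abs_add_le x y
        _ ≤ (m1 + n1 • a) + (m2 + n2 • a) := add_le_add hx hy
        _ = m1 + m2 + (n1 + n2) • a := by rw [add_nsmul]; abel
    · rintro x ⟨m1, hm1, hm1p, n1, hx⟩
      exact ⟨m1, hm1, hm1p, n1, by rwa [abs_neg]⟩
    · rintro x ⟨m1, hm1, hm1p, n1, hx⟩ y ⟨m2, hm2, hm2p, n2, hy⟩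
      refine ⟨m1 + m2, hadd _ hm1 _ hm2, add_nonneg hm1p hm2p, n1 + n2, ?_⟩
      calc |x ⊔ y| ≤ |x| + |y| := aux_abs_sup_le x y
        _ ≤ (m1 + n1 • a) + (m2 + n2 • a) := add_le_add hx hy
        _ = m1 + m2 + (n1 + n2) • a := by rw [add_nsmul]; abel
    · rintro x ⟨m1, hm1, hm1p, n1, hx⟩ y ⟨m2, hm2, hm2p, n2, hy⟩
      refine ⟨m1 + m2, hadd _ hm1 _ hm2, add_nonneg hm1p hm2p, n1 + n2, ?_⟩
      calc |x ⊓ y| ≤ |x| + |y| := aux_abs_inf_le x y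
        _ ≤ (m1 + n1 • a) + (m2 + n2 • a) := add_le_add hx hy
        _ = m1 + m2 + (n1 + n2) • a := by rw [add_nsmul]; abel
    · rintro x y hx hxy ⟨m1, hm1, hm1p, n1, hy⟩
      exact ⟨m1, hm1, hm1p, n1, (abs_of_nonneg hx).le.trans (hxy.trans ((le_abs_self y).trans hy))⟩
  by_contra hno
  have : H = M := hmax H hHc (fun w hw hwu => hno ⟨w, hwu, hw⟩) hMH
  exact haM (this ▸ haH)

/-- a convex ℓ-subgroup maximal with respect to not containing
any weak order unit is prime. -/
theorem maxD_is_prime (u : G) (hu : IsWeakUnit u)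
    (M : Set G) (hM : IsConvexLSubgroup M) (hMw : ∀ w ∈ M, ¬ IsWeakUnit w)
    (hmax : ∀ H : Set G, IsConvexLSubgroup H → (∀ w ∈ H, ¬ IsWeakUnit w) →
      M ⊆ H → H = M)
    (a b : G) (ha : 0 ≤ a) (hb : 0 ≤ b) (hab : a ⊓ b = 0) :
    a ∈ M ∨ b ∈ M := by
  by_contra hcon
  push_neg at hcon
  obtain ⟨haM, hbM⟩ := hcon
  obtain ⟨wa, hwa, ma, hma, hmap, n, hba⟩ := aux_exists_wu M hM hmax a ha haM
  obtain ⟨wb, hwb, mb, hmb, hmbp, k, hbb⟩ := aux_exists_wu M hM hmax b hb hbM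
  set w := wa ⊓ wb with hw
  have hwpos : 0 ≤ w := le_inf hwa.1 hwb.1
  -- w is a weak unit
  have hwu : IsWeakUnit w := by
    refine ⟨hwpos, fun x hx => ?_⟩
    have h1 : (|x| ⊓ wa) ⊓ wb = 0 := by rw [inf_assoc]; exact hx
    have h2 : |x| ⊓ wa = 0 := by
      have hnn : 0 ≤ |x| ⊓ wa := le_inf (abs_nonneg x) hwa.1
      have := hwb.2 (|x| ⊓ wa) (by rwa [abs_of_nonneg hnn])
      exact this
    exact hwa.2 x h2
  -- w ∈ M
  have hwM : w ∈ M := by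
    obtain ⟨h0, hadd, hneg, hsup, hinf, hconv⟩ := hM
    have h1 : w ≤ ma + n • a := inf_le_left.trans ((le_abs_self wa).trans hba)
    have h2 : w ≤ mb + k • b := inf_le_right.trans ((le_abs_self wb).trans hbb)
    have h3 : w ≤ (ma + mb + n • a) ⊓ (ma + mb + k • b) := by
      refine le_inf (h1.trans ?_) (h2.trans ?_)
      · exact add_le_add (le_add_of_nonneg_right hmbp) (le_refl _)
      · exact add_le_add (le_add_of_nonneg_left hmap) (le_refl _)
    have h4 : (ma + mb + n • a) ⊓ (ma + mb + k • b) = ma + mb := by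
      rw [← add_inf, aux_nsmul_inf_nsmul a b ha hb hab n k, add_zero]
    rw [h4] at h3
    exact hconv w (ma + mb) hwpos h3 (hadd _ hma _ hmb)
  exact hMw w hwM hwu
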